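/- arXiv:2405.15424 — 2 statements merged into one kernel-verified Lean document; each statement's English description precedes it below -/
import Mathlib

section
/- For any probability measure μ on X, hypothesis class H ⊆ Y^X, and ε > 0, the covering number with respect to the population metric d_μ is bounded by the supremum over m of the expected empirical covering number at scale ε/2: N(ε, H, d_μ) ≤ sup_{m∈ℕ} E_{x₁,…,x_m ∼ μ^m}[ N(ε/2, H, d_{μ̂_m}) ]. -/
open MeasureTheory ENNReal

noncomputable def coverNum {G : Type*} (d : G → G → ℝ) (ε : ℝ) (A : Set G) : ℕ∞ :=
  sInf {n : ℕ∞ | ∃ C : Set G, C ⊆ A ∧ (∀ g ∈ A, ∃ g' ∈ C, d g g' ≤ ε) ∧ C.encard = n}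

/-- The empirical (normalized Hamming) metric induced by a sample `ω : Fin m → X`. -/
noncomputable def empDistSeq {X Y : Type*} [DecidableEq Y] {m : ℕ} (ω : Fin m → X)
    (f g : X → Y) : ℝ :=
  (∑ t, if f (ω t) ≠ g (ω t) then (1 : ℝ) else 0) / m

lemma empDistSeq_symm {X Y : Type*} [DecidableEq Y] {m : ℕ} (ω : Fin m → X) (f g : X → Y) :
    empDistSeq ω f g = empDistSeq ω g f := by
  unfold empDistSeq
  congr 1
  exact Finset.sum_congr rfl fun t _ => by simp [ne_comm]

lemma empDistSeq_triangle {X Y : Type*} [DecidableEq Y] {m : ℕ} (ω : Fin m → X)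
    (f g h : X → Y) : empDistSeq ω f h ≤ empDistSeq ω f g + empDistSeq ω g h := by
  unfold empDistSeq
  rw [← add_div]
  have hm : (0:ℝ) ≤ (m:ℝ) := Nat.cast_nonneg m
  apply div_le_div_of_nonneg_right ?_ hm |>.trans_eq rfl
  rw [← Finset.sum_add_distrib]
  refine Finset.sum_le_sum fun t _ => ?_
  by_cases h1 : f (ω t) ≠ h (ω t) <;> by_cases h2 : f (ω t) ≠ g (ω t) <;>
    by_cases h3 : g (ω t) ≠ h (ω t) <;> simp_all

lemma le_coverNum_of_packing {G : Type*} (d : G → G → ℝ)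
    (hsymm : ∀ a b, d a b = d b a) (htri : ∀ a b c, d a c ≤ d a b + d b c)
    {ε ε' : ℝ} (hεε : ε' + ε' ≤ ε) (A : Set G) (P : Finset G) (hPA : ↑P ⊆ A)
    (hsep : ∀ p ∈ P, ∀ q ∈ P, p ≠ q → ε < d p q) :
    (P.card : ℕ∞) ≤ coverNum d ε' A := by
  apply le_sInf
  rintro n ⟨C, hCA, hcov, rfl⟩
  have hchoice : ∀ p : {x // x ∈ P}, ∃ c ∈ C, d p.1 c ≤ ε' :=
    fun p => hcov p.1 (hPA p.2)
  choose φ hφC hφd using hchoice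
  have hinj : Function.Injective φ := by
    intro p q hpq
    by_contra hne
    have hne' : p.1 ≠ q.1 := fun h => hne (Subtype.ext h)
    have := hsep p.1 p.2 q.1 q.2 hne'
    have h2 : d p.1 q.1 ≤ ε' + ε' := by
      calc d p.1 q.1 ≤ d p.1 (φ p) + d (φ p) q.1 := htri _ _ _
      _ ≤ ε' + ε' := add_le_add (hφd p) (by rw [hsymm]; rw [hpq]; exact hφd q)
    linarith
  calc (P.card : ℕ∞) = (Set.univ : Set {x // x ∈ P}).encard := by
        rw [Set.encard_univ, ENat.card_eq_coe_fintype_card, Fintype.card_coe]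
    _ = (φ '' Set.univ).encard := ((hinj.injOn).encard_image).symm
    _ ≤ C.encard := Set.encard_le_encard (by rintro _ ⟨p, _, rfl⟩; exact hφC p)

lemma coverNum_le_of_cover {G : Type*} (d : G → G → ℝ) (ε : ℝ) (A : Set G) (P : Finset G)
    (hPA : ↑P ⊆ A) (hcov : ∀ g ∈ A, ∃ p ∈ P, d g p ≤ ε) :
    coverNum d ε A ≤ P.card :=
  sInf_le ⟨↑P, hPA, fun g hg => hcov g hg, Set.encard_coe_eq_coe_finsetCard P⟩


section cheb
variable {X : Type*} [MeasurableSpace X]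

lemma pi_integral_mul (μ : Measure X) [IsProbabilityMeasure μ] {m : ℕ}
    {g : X → ℝ} (s t : Fin m) (hst : s ≠ t) :
    ∫ ω : Fin m → X, g (ω s) * g (ω t) ∂(Measure.pi fun _ => μ)
      = (∫ x, g x ∂μ) * ∫ x, g x ∂μ := by
  letI : MeasureSpace X := ⟨μ⟩
  have hvol : (Measure.pi fun _ : Fin m => μ) = (volume : Measure (Fin m → X)) :=
    (volume_pi).symm
  have hfilter : Finset.filter (fun i => i = s ∨ i = t) Finset.univ
      = ({s, t} : Finset (Fin m)) := by
    ext i; simp [Finset.mem_filter, Finset.mem_insert]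
  have key : ∀ c : Fin m → ℝ,
      (∏ i, if i = s ∨ i = t then c i else 1) = c s * c t := by
    intro c
    rw [← Finset.prod_filter, hfilter, Finset.prod_insert (by simp [hst]),
      Finset.prod_singleton]
  have h1 : ∀ ω : Fin m → X, g (ω s) * g (ω t)
      = ∏ i, (fun i x => if i = s ∨ i = t then g x else 1) i (ω i) := by
    intro ω; exact (key fun i => g (ω i)).symm
  rw [hvol]
  simp_rw [h1]
  rw [volume_pi, MeasureTheory.integral_fintype_prod_eq_prod
    (fun i x => if i = s ∨ i = t then g x else 1)]
  have h2 : ∀ i : Fin m, (∫ x : X, if i = s ∨ i = t then g x else 1)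
      = (if i = s ∨ i = t then ∫ x, g x ∂μ else 1) := by
    intro i
    by_cases h : i = s ∨ i = t
    · simp only [if_pos h]; rfl
    · simp only [if_neg h]; simp
  simp only [h2]
  exact key fun _ => ∫ x, g x ∂μ

lemma pi_integral_sq (μ : Measure X) [IsProbabilityMeasure μ] {m : ℕ}
    {g : X → ℝ} (s : Fin m) :
    ∫ ω : Fin m → X, g (ω s) ^ 2 ∂(Measure.pi fun _ => μ) = ∫ x, g x ^ 2 ∂μ := by
  letI : MeasureSpace X := ⟨μ⟩
  have hvol : (Measure.pi fun _ : Fin m => μ) = (volume : Measure (Fin m → X)) :=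
    (volume_pi).symm
  have h1 : ∀ ω : Fin m → X, g (ω s) ^ 2
      = ∏ i, (fun i x => if i = s then g x ^ 2 else 1) i (ω i) := by
    intro ω
    rw [Finset.prod_ite_eq' Finset.univ s (fun i => g (ω i) ^ 2)]
    simp
  rw [hvol]
  simp_rw [h1]
  rw [volume_pi, MeasureTheory.integral_fintype_prod_eq_prod
    (fun i x => if i = s then g x ^ 2 else 1)]
  have h2 : ∀ i : Fin m, (∫ x : X, if i = s then g x ^ 2 else 1)
      = (if i = s then ∫ x, g x ^ 2 ∂μ else 1) := by
    intro i
    by_cases h : i = s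
    · simp only [if_pos h]; rfl
    · simp only [if_neg h]; simp
  simp only [h2]
  rw [Finset.prod_ite_eq' Finset.univ s (fun _ => ∫ x, g x ^ 2 ∂μ)]
  simp


lemma cheb (μ : Measure X) [IsProbabilityMeasure μ] {A : Set X} (hA : MeasurableSet A)
    {ε : ℝ} (hε : 0 < ε) (hlt : ε < (μ A).toReal) {m : ℕ} (hm : 0 < m) :
    (Measure.pi fun _ : Fin m => μ)
      {ω | (∑ t, A.indicator (fun _ => (1:ℝ)) (ω t)) / m ≤ ε}
      ≤ ENNReal.ofReal (1 / (m * ((μ A).toReal - ε)^2)) := by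
  set π : Measure (Fin m → X) := Measure.pi fun _ => μ with hπ
  haveI : IsProbabilityMeasure π := by rw [hπ]; infer_instance
  set p : ℝ := (μ A).toReal with hp
  have hp0 : 0 ≤ p := ENNReal.toReal_nonneg
  have hp1 : p ≤ 1 := by
    rw [hp]
    calc (μ A).toReal ≤ (μ Set.univ).toReal :=
      ENNReal.toReal_mono (measure_ne_top μ _) (measure_mono (Set.subset_univ A))
    _ = 1 := by simp
  set δ : ℝ := p - ε with hδdef
  have hδ : 0 < δ := by simp [hδdef]; linarith
  have hmr : (0:ℝ) < m := Nat.cast_pos.mpr hm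
  set g : X → ℝ := fun x => A.indicator (fun _ => (1:ℝ)) x - p with hgdef
  have hg : Measurable g := (measurable_const.indicator hA).sub measurable_const
  have hgb : ∀ x, |g x| ≤ 1 := by
    intro x
    rw [hgdef]
    by_cases h : x ∈ A <;> simp [Set.indicator_of_mem, Set.indicator_of_notMem, h, abs_le] <;>
      constructor <;> linarith
  have hindint : Integrable (A.indicator fun _ => (1:ℝ)) μ :=
    (integrable_const (1:ℝ)).indicator hA
  have hgint : Integrable g μ := hindint.sub (integrable_const p)
  have hgzero : ∫ x, g x ∂μ = 0 := by
    rw [hgdef]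
    rw [integral_sub hindint (integrable_const p), integral_indicator_const _ hA,
      integral_const]
    simp [hp, measureReal_def]
  have hg2 : ∫ x, g x ^ 2 ∂μ ≤ 1 := by
    have : ∀ x, g x ^ 2 ≤ 1 := fun x => by
      have := hgb x; nlinarith [abs_nonneg (g x), sq_abs (g x)]
    calc ∫ x, g x ^ 2 ∂μ ≤ ∫ _x, (1:ℝ) ∂μ := by
          apply integral_mono ?_ (integrable_const 1) this
          exact (integrable_const (1:ℝ)).mono'
            (hg.pow_const 2).aestronglyMeasurable
            (ae_of_all _ fun x => by
              rw [Real.norm_eq_abs, abs_pow]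
              simpa using pow_le_pow_left₀ (abs_nonneg (g x)) (hgb x) 2)
      _ = 1 := by simp
  set F : (Fin m → X) → ℝ := fun ω => ∑ t, g (ω t) with hFdef
  have hFmeas : Measurable F :=
    Finset.measurable_sum _ fun t _ => hg.comp (measurable_pi_apply t)
  have hFb : ∀ ω, |F ω| ≤ m := by
    intro ω
    calc |F ω| ≤ ∑ t, |g (ω t)| := Finset.abs_sum_le_sum_abs _ _
    _ ≤ ∑ _t : Fin m, (1:ℝ) := Finset.sum_le_sum fun t _ => hgb (ω t)
    _ = m := by simp
  have hint : ∀ s t : Fin m, Integrable (fun ω => g (ω s) * g (ω t)) π := by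
    intro s t
    refine (integrable_const (1:ℝ)).mono'
      ((hg.comp (measurable_pi_apply s)).mul
        (hg.comp (measurable_pi_apply t))).aestronglyMeasurable
      (ae_of_all _ fun ω => ?_)
    rw [Real.norm_eq_abs, abs_mul]
    exact mul_le_one₀ (hgb _) (abs_nonneg _) (hgb _)
  have hF2int : Integrable (fun ω => F ω ^ 2) π :=
    (integrable_const ((m:ℝ)^2)).mono' (hFmeas.pow_const 2).aestronglyMeasurable
      (ae_of_all _ fun ω => by
        rw [Real.norm_eq_abs, abs_pow]
        exact pow_le_pow_left₀ (abs_nonneg _) (hFb ω) 2)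
  have hvar : ∫ ω, F ω ^ 2 ∂π ≤ m := by
    have hexp : ∀ ω, F ω ^ 2 = ∑ s : Fin m, ∑ t : Fin m, g (ω s) * g (ω t) := by
      intro ω
      rw [sq, hFdef, Finset.sum_mul_sum]
    calc ∫ ω, F ω ^ 2 ∂π = ∑ s : Fin m, ∑ t : Fin m, ∫ ω, g (ω s) * g (ω t) ∂π := by
          simp_rw [hexp]
          rw [integral_finset_sum _ fun s _ => integrable_finset_sum _ fun t _ => hint s t]
          exact Finset.sum_congr rfl fun s _ =>
            integral_finset_sum _ fun t _ => hint s t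
      _ ≤ ∑ s : Fin m, ∑ t : Fin m, (if s = t then (1:ℝ) else 0) := by
          refine Finset.sum_le_sum fun s _ => Finset.sum_le_sum fun t _ => ?_
          by_cases hst : s = t
          · subst hst
            simp only [if_pos rfl]
            calc ∫ ω, g (ω s) * g (ω s) ∂π = ∫ ω, g (ω s) ^ 2 ∂π := by
                  congr 1; funext ω; ring
              _ = ∫ x, g x ^ 2 ∂μ := pi_integral_sq μ s
              _ ≤ 1 := hg2
          · rw [if_neg hst, pi_integral_mul μ s t hst, hgzero]
            simp
      _ = m := by simp
  -- Markov
  have markov := mul_meas_ge_le_integral_of_nonneg (μ := π) (f := fun ω => F ω ^ 2)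
    (ae_of_all _ fun ω => sq_nonneg _) hF2int (δ^2 * m^2)
  have hsub : {ω : Fin m → X | (∑ t, A.indicator (fun _ => (1:ℝ)) (ω t)) / m ≤ ε}
      ⊆ {ω | δ^2 * m^2 ≤ F ω ^ 2} := by
    intro ω hω
    simp only [Set.mem_setOf_eq] at hω ⊢
    have hS : (∑ t, A.indicator (fun _ => (1:ℝ)) (ω t)) ≤ ε * m := by
      rw [div_le_iff₀ hmr] at hω; exact hω
    have hF : F ω = (∑ t, A.indicator (fun _ => (1:ℝ)) (ω t)) - m * p := by
      show (∑ t, (A.indicator (fun _ => (1:ℝ)) (ω t) - p)) = _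
      rw [Finset.sum_sub_distrib]
      simp [mul_comm]
    have h1 : F ω ≤ -(δ * m) := by rw [hF, hδdef]; nlinarith
    have h2 : δ * m ≤ -F ω := by linarith
    calc δ^2 * m^2 = (δ * m)^2 := by ring
      _ ≤ (-F ω)^2 := by
          apply pow_le_pow_left₀ (by positivity) h2
      _ = F ω ^ 2 := by ring
  have hBfin : π {ω | δ^2 * m^2 ≤ F ω ^ 2} ≠ ⊤ := measure_ne_top π _
  have htoReal : (π {ω | δ^2 * m^2 ≤ F ω ^ 2}).toReal ≤ 1 / (m * δ^2) := by
    have hc : (0:ℝ) < δ^2 * m^2 := by positivity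
    have := markov.trans hvar
    rw [← le_div_iff₀' hc] at this
    calc (π {ω | δ^2 * m^2 ≤ F ω ^ 2}).toReal ≤ (m:ℝ) / (δ^2 * m^2) := this
      _ = 1 / (m * δ^2) := by field_simp
  calc π {ω | (∑ t, A.indicator (fun _ => (1:ℝ)) (ω t)) / m ≤ ε}
      ≤ π {ω | δ^2 * m^2 ≤ F ω ^ 2} := measure_mono hsub
    _ = ENNReal.ofReal ((π {ω | δ^2 * m^2 ≤ F ω ^ 2}).toReal) :=
        (ENNReal.ofReal_toReal hBfin).symm
    _ ≤ ENNReal.ofReal (1 / (m * δ^2)) := ENNReal.ofReal_le_ofReal htoReal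
    _ = ENNReal.ofReal (1 / (m * ((μ A).toReal - ε)^2)) := by rw [hδdef, hp]


end cheb

lemma key {X Y : Type*} [MeasurableSpace X] [DecidableEq Y]
    (μ : Measure X) [IsProbabilityMeasure μ] (H : Set (X → Y))
    (hmeas : ∀ h₁ ∈ H, ∀ h₂ ∈ H, MeasurableSet {x | h₁ x ≠ h₂ x})
    {ε : ℝ} (hε : 0 < ε) (P : Finset (X → Y)) (hPH : ↑P ⊆ H)
    (hsep : ∀ p ∈ P, ∀ q ∈ P, p ≠ q → ε < (μ {x | p x ≠ q x}).toReal) :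
    (P.card : ℝ≥0∞) ≤ ⨆ m : ℕ, ∫⁻ ω : Fin m → X,
      (coverNum (empDistSeq ω) (ε / 2) H : ℝ≥0∞) ∂(Measure.pi fun _ => μ) := by
  set S := ⨆ m : ℕ, ∫⁻ ω : Fin m → X,
      (coverNum (empDistSeq ω) (ε / 2) H : ℝ≥0∞) ∂(Measure.pi fun _ => μ) with hS
  classical
  apply ENNReal.le_of_forall_pos_le_add
  intro η hη _
  set k := P.card with hk
  -- total constant
  set Ctot : ℝ := ∑ pq ∈ P ×ˢ P, (if pq.1 ≠ pq.2 then
      1 / ((μ {x | pq.1 x ≠ pq.2 x}).toReal - ε)^2 else 0) with hCtot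
  have hCtot0 : 0 ≤ Ctot := Finset.sum_nonneg fun pq _ => by
    split_ifs with h
    · positivity
    · exact le_refl 0
  have hη' : (0:ℝ) < η := hη
  obtain ⟨m, hmgt⟩ := exists_nat_gt ((k : ℝ) * Ctot / η)
  have hm : 0 < m := by
    have : (0:ℝ) ≤ (k:ℝ) * Ctot / η := by positivity
    exact_mod_cast Nat.cast_pos.mp (lt_of_le_of_lt this hmgt)
  set π : Measure (Fin m → X) := Measure.pi fun _ => μ with hπ
  haveI : IsProbabilityMeasure π := by rw [hπ]; infer_instance
  -- the good event
  set E : Set (Fin m → X) :=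
    ⋂ p ∈ (P : Set (X → Y)), ⋂ q ∈ (P : Set (X → Y)),
      {ω | p ≠ q → ε < empDistSeq ω p q} with hE
  have hempmeas : ∀ p ∈ P, ∀ q ∈ P, Measurable fun ω : Fin m → X => empDistSeq ω p q := by
    intro p hp q hq
    unfold empDistSeq
    apply Measurable.div_const
    apply Finset.measurable_sum
    intro t _
    have hc : MeasurableSet {ω : Fin m → X | p (ω t) ≠ q (ω t)} := by
      exact measurableSet_preimage (measurable_pi_apply (X := fun _ : Fin m => X) t) (hmeas p (hPH hp) q (hPH hq))
    exact Measurable.ite hc measurable_const measurable_const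
  have hEmeas : MeasurableSet E := by
    rw [hE]
    refine MeasurableSet.biInter (Set.to_countable _) fun p hp => ?_
    refine MeasurableSet.biInter (Set.to_countable _) fun q hq => ?_
    by_cases hpq : p = q
    · have : {ω : Fin m → X | p ≠ q → ε < empDistSeq ω p q} = Set.univ := by
        ext ω; simp [hpq]
      rw [this]; exact MeasurableSet.univ
    · have : {ω : Fin m → X | p ≠ q → ε < empDistSeq ω p q}
          = {ω : Fin m → X | ε < empDistSeq ω p q} := by
        ext ω; simp [hpq]
      rw [this]
      exact measurableSet_lt measurable_const (hempmeas p hp q hq)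
  -- on E the empirical cover number is at least k
  have hcov : ∀ ω ∈ E, (k : ℝ≥0∞) ≤ (coverNum (empDistSeq ω) (ε / 2) H : ℝ≥0∞) := by
    intro ω hω
    have h1 : (k : ℕ∞) ≤ coverNum (empDistSeq ω) (ε / 2) H := by
      refine le_coverNum_of_packing (empDistSeq ω) (empDistSeq_symm ω)
        (empDistSeq_triangle ω) (by linarith : ε/2 + ε/2 ≤ ε) H P hPH ?_
      intro p hp q hq hpq
      simp only [hE, Set.mem_iInter, Set.mem_setOf_eq] at hω
      exact hω p hp q hq hpq
    calc (k : ℝ≥0∞) = ((k : ℕ∞) : ℝ≥0∞) := by rw [ENat.toENNReal_coe]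
    _ ≤ _ := ENat.toENNReal_le.mpr h1
  -- lintegral lower bound
  have hlint : (k : ℝ≥0∞) * π E ≤ ∫⁻ ω : Fin m → X,
      (coverNum (empDistSeq ω) (ε / 2) H : ℝ≥0∞) ∂π := by
    rw [← lintegral_indicator_const hEmeas (k : ℝ≥0∞)]
    refine lintegral_mono fun ω => ?_
    by_cases hω : ω ∈ E
    · rw [Set.indicator_of_mem hω]; exact hcov ω hω
    · rw [Set.indicator_of_notMem hω]; exact zero_le
  -- complement bound
  have hcompl : π Eᶜ ≤ ENNReal.ofReal (Ctot / m) := by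
    have hsub : Eᶜ ⊆ ⋃ pq ∈ P ×ˢ P, (if pq.1 ≠ pq.2 then
        {ω : Fin m → X | empDistSeq ω pq.1 pq.2 ≤ ε} else ∅) := by
      intro ω hω
      simp only [hE, Set.compl_iInter, Set.mem_iUnion, Set.mem_compl_iff,
        Set.mem_setOf_eq] at hω
      obtain ⟨p, hp, q, hq, hpq⟩ := hω
      push_neg at hpq
      have hmem : (p, q) ∈ P ×ˢ P :=
        Finset.mem_product.mpr ⟨Finset.mem_coe.mp hp, Finset.mem_coe.mp hq⟩
      refine Set.mem_biUnion hmem ?_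
      rw [if_pos (show (p,q).1 ≠ (p,q).2 from hpq.1)]
      exact hpq.2
    calc π Eᶜ ≤ ∑ pq ∈ P ×ˢ P, π (if pq.1 ≠ pq.2 then
          {ω : Fin m → X | empDistSeq ω pq.1 pq.2 ≤ ε} else ∅) :=
        (measure_mono hsub).trans (measure_biUnion_finset_le _ _)
      _ ≤ ∑ pq ∈ P ×ˢ P, ENNReal.ofReal ((if pq.1 ≠ pq.2 then
          1 / ((μ {x | pq.1 x ≠ pq.2 x}).toReal - ε)^2 else 0) / m) := by
          refine Finset.sum_le_sum fun pq hpq => ?_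
          obtain ⟨hp, hq⟩ := Finset.mem_product.mp hpq
          by_cases h : pq.1 ≠ pq.2
          · rw [if_pos h, if_pos h]
            have hset : {ω : Fin m → X | empDistSeq ω pq.1 pq.2 ≤ ε}
                = {ω : Fin m → X |
                    (∑ t, ({x | pq.1 x ≠ pq.2 x}).indicator (fun _ => (1:ℝ)) (ω t)) / m ≤ ε} := by
              ext ω
              simp [empDistSeq, Set.indicator_apply]
            rw [hset, hπ]
            have := cheb μ (hmeas pq.1 (hPH hp) pq.2 (hPH hq)) hε
              (hsep pq.1 hp pq.2 hq h) hm
            refine this.trans (ENNReal.ofReal_le_ofReal (le_of_eq ?_))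
            rw [div_div, mul_comm]
          · rw [if_neg h, if_neg h]
            simp
      _ = ENNReal.ofReal (Ctot / m) := by
          rw [hCtot, Finset.sum_div]
          rw [ENNReal.ofReal_sum_of_nonneg]
          intro pq _
          split_ifs with h
          · positivity
          · simp
  -- combine
  have hone : (1 : ℝ≥0∞) ≤ π E + π Eᶜ := by
    have : π Set.univ ≤ π E + π Eᶜ := by
      rw [show (Set.univ : Set (Fin m → X)) = E ∪ Eᶜ by simp]
      exact measure_union_le _ _
    simpa using this
  have hεη : (k : ℝ≥0∞) * ENNReal.ofReal (Ctot / m) ≤ (η : ℝ≥0∞) := by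
    have h1 : (k : ℝ≥0∞) = ENNReal.ofReal (k : ℝ) := by
      rw [ENNReal.ofReal_natCast]
    rw [h1, ← ENNReal.ofReal_mul (Nat.cast_nonneg k)]
    rw [← ENNReal.ofReal_coe_nnreal]
    apply ENNReal.ofReal_le_ofReal
    have hmr : (0:ℝ) < m := Nat.cast_pos.mpr hm
    have h2 : (k:ℝ) * Ctot < m * η := (div_lt_iff₀ hη').mp hmgt
    rw [← mul_div_assoc]
    exact (div_le_iff₀ hmr).mpr (by nlinarith)
  calc (k : ℝ≥0∞) = (k : ℝ≥0∞) * 1 := (mul_one _).symm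
    _ ≤ (k : ℝ≥0∞) * (π E + π Eᶜ) := mul_le_mul_right hone _
    _ = (k : ℝ≥0∞) * π E + (k : ℝ≥0∞) * π Eᶜ := mul_add _ _ _
    _ ≤ S + (η : ℝ≥0∞) := by
        refine add_le_add ?_ ?_
        · exact hlint.trans (le_iSup (fun m : ℕ => ∫⁻ ω : Fin m → X,
            (coverNum (empDistSeq ω) (ε / 2) H : ℝ≥0∞) ∂(Measure.pi fun _ => μ)) m)
        · exact (mul_le_mul_right hcompl _).trans hεη


/-- UBEME implies bounded metric entropy with respect to `μ`:
`N(ε, H, d_μ) ≤ sup_m E_{x₁,…,x_m ∼ μ^m}[N(ε/2, H, d_{μ̂_m})]`. -/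
theorem coverNum_population_le_sup_expected_empirical {X Y : Type*} [MeasurableSpace X]
    [DecidableEq Y] (μ : Measure X) [IsProbabilityMeasure μ] (H : Set (X → Y))
    (hmeas : ∀ h₁ ∈ H, ∀ h₂ ∈ H, MeasurableSet {x | h₁ x ≠ h₂ x})
    {ε : ℝ} (hε : 0 < ε) :
    (coverNum (fun h₁ h₂ => (μ {x | h₁ x ≠ h₂ x}).toReal) ε H : ℝ≥0∞) ≤
      ⨆ m : ℕ, ∫⁻ ω : Fin m → X,
        (coverNum (empDistSeq ω) (ε / 2) H : ℝ≥0∞) ∂(Measure.pi fun _ => μ) := by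
  classical
  set d : (X → Y) → (X → Y) → ℝ := fun h₁ h₂ => (μ {x | h₁ x ≠ h₂ x}).toReal with hd
  set S := ⨆ m : ℕ, ∫⁻ ω : Fin m → X,
      (coverNum (empDistSeq ω) (ε / 2) H : ℝ≥0∞) ∂(Measure.pi fun _ => μ) with hS
  have hdsymm : ∀ a b : X → Y, d a b = d b a := by
    intro a b
    simp only [hd]
    congr 2
    ext x
    exact ne_comm
  have hdself : ∀ a : X → Y, d a a = 0 := by
    intro a
    simp only [hd]
    have : {x | a x ≠ a x} = (∅ : Set X) := by ext x; simp
    rw [this]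
    simp
  set Pk : ℕ → Prop := fun n => ∃ P : Finset (X → Y), ↑P ⊆ H ∧
    (∀ p ∈ P, ∀ q ∈ P, p ≠ q → ε < d p q) ∧ P.card = n with hPk
  by_cases hall : ∀ n, Pk n
  · have hub : ∀ n : ℕ, (n : ℝ≥0∞) ≤ S := by
      intro n
      obtain ⟨P, h1, h2, h3⟩ := hall n
      have := key μ H hmeas hε P h1 h2
      rw [h3] at this
      exact this
    have htop : S = ⊤ := by
      by_contra hne
      obtain ⟨n, hn⟩ := ENNReal.exists_nat_gt (lt_top_iff_ne_top.mp
        (lt_of_le_of_ne le_top hne))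
      exact absurd (hub n) (not_le.mpr hn)
    rw [htop]
    exact le_top
  · push_neg at hall
    obtain ⟨n₀, hn₀⟩ := hall
    have hdown : ∀ a b : ℕ, a ≤ b → Pk b → Pk a := by
      rintro a b hab ⟨P, h1, h2, h3⟩
      obtain ⟨Q, hQP, hQcard⟩ := Finset.exists_subset_card_eq (h3 ▸ hab)
      exact ⟨Q, (Finset.coe_subset.mpr hQP).trans h1,
        fun p hp q hq => h2 p (hQP hp) q (hQP hq), hQcard⟩
    have hbdd : BddAbove {n | Pk n} := by
      refine ⟨n₀, fun a ha => ?_⟩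
      by_contra h
      push_neg at h
      exact hn₀ (hdown n₀ a h.le ha)
    have hne : {n | Pk n}.Nonempty := ⟨0, ⟨∅, by simp, by simp, rfl⟩⟩
    set k := sSup {n | Pk n} with hkdef
    obtain ⟨P, hPH, hsep, hcard⟩ : Pk k := Nat.sSup_mem hne hbdd
    have hnot : ¬ Pk (k + 1) := fun h => (Nat.lt_succ_self k).not_ge (le_csSup hbdd h)
    have hcover : ∀ g ∈ H, ∃ p ∈ P, d g p ≤ ε := by
      intro g hg
      by_contra hc
      push_neg at hc
      have hgP : g ∉ P := by
        intro hgP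
        have := hc g hgP
        rw [hdself g] at this
        linarith
      apply hnot
      refine ⟨insert g P, ?_, ?_, by rw [Finset.card_insert_of_notMem hgP, hcard]⟩
      · rw [Finset.coe_insert]
        exact Set.insert_subset hg hPH
      · intro p hp q hq hpq
        rcases Finset.mem_insert.mp hp with hpg | hpP <;>
          rcases Finset.mem_insert.mp hq with hqg | hqP
        · exact absurd (hpg.trans hqg.symm) hpq
        · exact hpg ▸ hc q hqP
        · rw [hdsymm]
          exact hqg ▸ hc p hpP
        · exact hsep p hpP q hqP hpq
    have h1 : coverNum d ε H ≤ (P.card : ℕ∞) := coverNum_le_of_cover d ε H P hPH hcover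
    calc (coverNum d ε H : ℝ≥0∞) ≤ ((P.card : ℕ∞) : ℝ≥0∞) := ENat.toENNReal_le.mpr h1
      _ = (P.card : ℝ≥0∞) := ENat.toENNReal_coe _
      _ ≤ S := key μ H hmeas hε P hPH hsep
end

section
/- The hypothesis class H = ⋃_{n∈ℕ} ⋃_{(x₁,…,xₙ) distinct} ⋃_{θ∈{0,1}ⁿ} {h^θ_{(x₁,…,xₙ)}}, where h^θ_{(x₁,…,xₙ)}(x) = ((x₁,…,xₙ), θ_{≤t}) if x = x_t and ((x₁,…,xₙ), ⋆) otherwise, admits a sample compression scheme of size 1: there exist functions κ mapping any H-realizable labeled sample S to a single element of S, and ρ mapping a single labeled example to a hypothesis in H, such that ρ(κ(S)) agrees with the sample labels on every point of S. -/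
open Classical

/-- Labels: a tuple of points (a list of reals) together with either a binary-string
prefix (`some`) or the symbol ⋆ (`none`). -/
abbrev YL := List ℝ × Option (List Bool)

open Classical in
/-- The hypothesis `h^θ_{(z₁,…,z_m)}`: on `z_t` it outputs `((z₁,…,z_m), θ_{≤t})`, and
elsewhere it outputs `((z₁,…,z_m), ⋆)`. -/
noncomputable def hypL (z : List ℝ) (θ : List Bool) (v : ℝ) : YL :=
  if v ∈ z then (z, some (θ.take (z.idxOf v + 1))) else (z, none)

/-- The hypothesis class of all `h^θ_{(z₁,…,z_m)}` over finite sequences of distinct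
points `z` and binary strings `θ` of matching length. -/
def HL : Set (ℝ → YL) :=
  {f | ∃ z : List ℝ, ∃ θ : List Bool, z.Nodup ∧ θ.length = z.length ∧ f = hypL z θ}

/-- key of a labeled example: length of its binary prefix (0 for ⋆). -/
def keyL (p : ℝ × YL) : ℕ := (p.2.2.getD []).length

noncomputable def κ0 (S : List (ℝ × YL)) : ℝ × YL :=
  (S.argmax keyL).getD ((0:ℝ), ([], none))

/-- pad a prefix with `false`s to the length of `z`. -/
def padL (z : List ℝ) (w : List Bool) : List Bool :=
  w ++ List.replicate (z.length - w.length) false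

noncomputable def ρ0 (p : ℝ × YL) : ℝ → YL :=
  hypL p.2.1 (padL p.2.1 (p.2.2.getD []))

/-- `HL` admits a sample compression scheme of size `1`: a compression map `κ`
selecting a single labeled example from any nonempty realizable sample, and a
reconstruction map `ρ` producing a hypothesis in `HL` that agrees with all the
labels of the sample. -/
theorem HL_compression_size_one :
    ∃ (κ : List (ℝ × YL) → ℝ × YL) (ρ : ℝ × YL → (ℝ → YL)),
      ∀ S : List (ℝ × YL), S ≠ [] → (∃ f ∈ HL, ∀ p ∈ S, f p.1 = p.2) →
        κ S ∈ S ∧ ρ (κ S) ∈ HL ∧ ∀ p ∈ S, ρ (κ S) p.1 = p.2 := by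
  refine ⟨κ0, ρ0, ?_⟩
  rintro S hS ⟨f, ⟨z, θ, hnd, hlen, rfl⟩, hf⟩
  obtain ⟨m, hm⟩ : ∃ m, S.argmax keyL = some m := by
    cases h : S.argmax keyL with
    | none => exact absurd (List.argmax_eq_none.mp h) hS
    | some m => exact ⟨m, rfl⟩
  have hmem : m ∈ S := List.argmax_mem hm
  have hκ : κ0 S = m := by simp [κ0, hm]
  have hmax : ∀ p ∈ S, keyL p ≤ keyL m := fun p hp =>
    le_of_not_gt (List.not_lt_of_mem_argmax hp hm)
  have hmval : hypL z θ m.1 = m.2 := hf m hmem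
  rw [hκ]
  refine ⟨hmem, ?_, ?_⟩
  · -- ρ0 m ∈ HL
    by_cases hmz : m.1 ∈ z
    · have : m.2 = (z, some (θ.take (z.idxOf m.1 + 1))) := by
        rw [← hmval, hypL, if_pos hmz]
      refine ⟨z, padL z (m.2.2.getD []), hnd, ?_, by rw [ρ0, this]⟩
      have hidx : z.idxOf m.1 < z.length := List.idxOf_lt_length_iff.mpr hmz
      have hle : (m.2.2.getD []).length ≤ z.length := by
        rw [this]; simp; omega
      simp [padL, this]
      omega
    · have : m.2 = (z, none) := by rw [← hmval, hypL, if_neg hmz]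
      refine ⟨z, padL z (m.2.2.getD []), hnd, ?_, by rw [ρ0, this]⟩
      simp [padL, this]
  · -- agreement
    intro p hp
    have hpval : hypL z θ p.1 = p.2 := hf p hp
    by_cases hmz : m.1 ∈ z
    · have hm2 : m.2 = (z, some (θ.take (z.idxOf m.1 + 1))) := by
        rw [← hmval, hypL, if_pos hmz]
      set t' := z.idxOf m.1 with ht'
      have hidx : t' < z.length := List.idxOf_lt_length_iff.mpr hmz
      have hwlen : (θ.take (t' + 1)).length = t' + 1 := by simp; omega
      by_cases hpz : p.1 ∈ z
      · have hp2 : p.2 = (z, some (θ.take (z.idxOf p.1 + 1))) := by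
          rw [← hpval, hypL, if_pos hpz]
        set t := z.idxOf p.1 with ht
        have hidxp : t < z.length := List.idxOf_lt_length_iff.mpr hpz
        have hkey : keyL p ≤ keyL m := hmax p hp
        have htt : t + 1 ≤ t' + 1 := by
          simp [keyL, hp2, hm2] at hkey; omega
        have : (padL z (m.2.2.getD [])).take (t + 1) = θ.take (t + 1) := by
          rw [hm2]
          simp only [Option.getD_some, padL]
          rw [List.take_append_of_le_length (by omega), List.take_take]
          congr 1; omega
        rw [ρ0, hm2]
        simp only [Option.getD_some]
        rw [hypL, if_pos hpz, hp2]
        simp only [← ht]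
        rw [show (padL z (θ.take (t' + 1))).take (t + 1) = θ.take (t + 1) from by
          rw [hm2] at this; exact this]
      · rw [ρ0, hypL]
        rw [hm2]
        simp only [Option.getD_some]
        rw [if_neg hpz, ← hpval, hypL, if_neg hpz]
    · -- m has ⋆: then all p have ⋆
      have hm2 : m.2 = (z, none) := by rw [← hmval, hypL, if_neg hmz]
      by_cases hpz : p.1 ∈ z
      · exfalso
        have hp2 : p.2 = (z, some (θ.take (z.idxOf p.1 + 1))) := by
          rw [← hpval, hypL, if_pos hpz]
        have hkey := hmax p hp
        have hidxp : z.idxOf p.1 < z.length := List.idxOf_lt_length_iff.mpr hpz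
        simp only [keyL, hp2, hm2, Option.getD_some, Option.getD_none,
          List.length_take, List.length_nil] at hkey
        omega
      · rw [ρ0, hm2]
        simp only [Option.getD_none]
        rw [hypL, if_neg hpz, ← hpval, hypL, if_neg hpz]
end
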